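/- Let p be an odd prime and suppose L_p is embedded in a harmonic matroid M. For any point of P written in homogeneous coordinates [x,y,z] (i.e., [1,s,-k] with x=1,y=s,z=-k, or [0,l,1] with x=0,y=l,z=1, or [0,1,0]) and any set ⟨a,b,c⟩ among ⟨0,0,1⟩, ⟨1,0,k⟩ (k ∈ Z_p), and ⟨j,-1,i⟩ (i,j ∈ Z_p): the point [x,y,z] belongs to ⟨a,b,c⟩ if and only if ax + by + cz = 0 in Z_p. -/

import Mathlib

open Set

namespace HarmonicPaper

variable {α : Type*}

/-- Extended rank of a set in a matroid: supremum of cardinalities of independent subsets. -/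
noncomputable def eRk (M : Matroid α) (S : Set α) : ℕ∞ :=
  ⨆ I ∈ {I : Set α | M.Indep I ∧ I ⊆ S}, I.encard

/-- A set of points is collinear if it has rank at most 2. -/
def Collin (M : Matroid α) (S : Set α) : Prop := eRk M S ≤ 2

/-- The six collinear triples of the non-Fano configuration on `y,x,z,o,q,r,s`. -/
def nonFanoLines (y x z o q r s : α) : Set (Set α) :=
  {{y, x, z}, {y, o, q}, {y, r, s}, {z, o, s}, {z, q, r}, {x, q, s}}

/-- `HP M y x z o q r s` : the restriction of `M` to the seven pairwise distinct points
`y,x,z,o,q,r,s` is a simple rank-3 matroid whose collinear triples are exactly those of the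
non-Fano matroid `F₇⁻`, or exactly those together with `{x,o,r}` (the Fano matroid `F₇`). -/
def HP (M : Matroid α) (y x z o q r s : α) : Prop :=
  List.Pairwise (· ≠ ·) [y, x, z, o, q, r, s] ∧
  ({y, x, z, o, q, r, s} : Set α) ⊆ M.E ∧
  eRk M {y, x, z, o, q, r, s} = 3 ∧
  (∀ a ∈ ({y, x, z, o, q, r, s} : Set α), ∀ b ∈ ({y, x, z, o, q, r, s} : Set α),
    a ≠ b → eRk M {a, b} = 2) ∧
  ((∀ a ∈ ({y, x, z, o, q, r, s} : Set α), ∀ b ∈ ({y, x, z, o, q, r, s} : Set α),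
      ∀ c ∈ ({y, x, z, o, q, r, s} : Set α), a ≠ b → a ≠ c → b ≠ c →
      (Collin M {a, b, c} ↔ ({a, b, c} : Set α) ∈ nonFanoLines y x z o q r s)) ∨
   (∀ a ∈ ({y, x, z, o, q, r, s} : Set α), ∀ b ∈ ({y, x, z, o, q, r, s} : Set α),
      ∀ c ∈ ({y, x, z, o, q, r, s} : Set α), a ≠ b → a ≠ c → b ≠ c →
      (Collin M {a, b, c} ↔
        ({a, b, c} : Set α) ∈ insert {x, o, r} (nonFanoLines y x z o q r s))))

/-- `Hc M y z x x'` : `x'` is a harmonic conjugate of `x` with respect to `y` and `z`. -/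
def Hc (M : Matroid α) (y z x x' : α) : Prop :=
  ∃ o q r s, HP M y x z o q r s ∧ M.closure {y, z} ∩ M.closure {o, r} = {x'}

/-- A matroid is harmonic if every harmonic configuration `HP` yields a (unique) harmonic
conjugate, which moreover depends only on `x, y, z` and not on the choice of `o,q,r,s`. -/
def IsHarmonic (M : Matroid α) : Prop :=
  (∀ y x z o q r s, HP M y x z o q r s →
    ∃ x', M.closure {y, z} ∩ M.closure {o, r} = {x'}) ∧
  (∀ y x z o q r s o' q' r' s', HP M y x z o q r s → HP M y x z o' q' r' s' →
    M.closure {y, z} ∩ M.closure {o, r} = M.closure {y, z} ∩ M.closure {o', r'})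

/-- One step of harmonic closure. -/
def hStep (M : Matroid α) (S : Set α) : Set α :=
  S ∪ {x | ∃ a ∈ S, ∃ b ∈ S, ∃ c ∈ S, Hc M a c b x}

/-- Iterated harmonic closure steps. -/
def hIter (M : Matroid α) : ℕ → Set α → Set α
  | 0, S => S
  | n + 1, S => hStep M (hIter M n S)

/-- The harmonic closure `h^∞(S)`. -/
def hCl (M : Matroid α) (S : Set α) : Set α := ⋃ n, hIter M n S

end HarmonicPaper
namespace HarmonicPaper

variable {α : Type*}

/-- The points of the matroid `L_p`: `A i = [0,i,1]`, `B i = [1,i,1]`, `C i = [1,i,0]`,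
and `V = [0,1,0]`. -/
inductive LpPoint (p : ℕ) : Type
  | A : ZMod p → LpPoint p
  | B : ZMod p → LpPoint p
  | C : ZMod p → LpPoint p
  | V : LpPoint p

open LpPoint

/-- The lines (maximal collinear sets of size ≥ 3) of `L_p`:
`⟨1,0,0⟩_p`, `⟨1,0,-1⟩_p`, `⟨0,0,1⟩_p`, and `⟨j,-1,i⟩_p = {[0,i,1],[1,i+j,1],[1,j,0]}`. -/
def LpLines (p : ℕ) : Set (Set (LpPoint p)) :=
  {S | S = {x | ∃ i, x = A i} ∪ {V} ∨ S = {x | ∃ i, x = B i} ∪ {V} ∨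
       S = {x | ∃ i, x = C i} ∪ {V} ∨ ∃ i j, S = {A i, B (i + j), C j}}

/-- Independence in the rank-3 simple matroid `L_p`: any set of at most two points is
independent, and a three-point set is independent iff it lies on no line. -/
def LpIndep (p : ℕ) (S : Set (LpPoint p)) : Prop :=
  S.encard ≤ 2 ∨ (S.encard = 3 ∧ ∀ L ∈ LpLines p, ¬ S ⊆ L)

/-- An embedding of `L_p` in the matroid `M`: an injection of the ground set of `L_p` into
the points of `M` under which independence is preserved and reflected. -/
def IsLpEmbedding (p : ℕ) (M : Matroid α) (f : LpPoint p → α) : Prop :=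
  Function.Injective f ∧ Set.range f ⊆ M.E ∧
  ∀ S : Set (LpPoint p), LpIndep p S ↔ M.Indep (f '' S)

/-- `⟨j,-1,i⟩ := h^∞(⟨j,-1,i⟩_p)`, the harmonic closure in `M` of the line
`{[0,i,1], [1,i+j,1], [1,j,0]}` of `L_p`. -/
def lineJI {p : ℕ} (M : Matroid α) (f : LpPoint p → α) (j i : ZMod p) : Set α :=
  hCl M (f '' {A i, B (i + j), C j})

/-- The family of points `[1,s,-k]` (`g s k` denotes `[1,s,-k]`) produced by the key lemma:
it agrees with the like-named points `[1,s,0]` and `[1,s,1]` of `L_p` and satisfies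
properties (i) and (ii) of the key lemma. -/
def IsKeyFamily {p : ℕ} (M : Matroid α) (f : LpPoint p → α)
    (g : ZMod p → ZMod p → α) : Prop :=
  (∀ s, g s 0 = f (C s)) ∧ (∀ s, g s (-1) = f (B s)) ∧
  (∀ k i j : ZMod p, (⋂ t : ZMod p, lineJI M f (j + k * t) (i + t)) = {g (j - k * i) k}) ∧
  (∀ k i j t : ZMod p, Collin M {f (A (i + t)), f (C (j + k * t)), g (j - k * i) k})

/-- `C(j,i) = {[0,i,1]} ∪ {[1,j-ki,-k] : k ∈ Z_p}`. -/
def cSet {p : ℕ} (f : LpPoint p → α) (g : ZMod p → ZMod p → α) (j i : ZMod p) : Set α :=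
  insert (f (A i)) {x | ∃ k : ZMod p, x = g (j - k * i) k}

/-- The point set `P = {[1,s,-k]} ∪ {[0,i,1]} ∪ {[0,1,0]}`. -/
def pSet {p : ℕ} (f : LpPoint p → α) (g : ZMod p → ZMod p → α) : Set α :=
  {x | ∃ s k, x = g s k} ∪ {x | ∃ i, x = f (A i)} ∪ {f V}

/-- The line family `𝓛₁ = {⟨0,0,1⟩} ∪ {⟨1,0,k⟩ : k ∈ Z_p}`, where
`⟨0,0,1⟩ = {[1,t,0] : t} ∪ {[0,1,0]}`, `⟨1,0,0⟩ = {[0,t,1] : t} ∪ {[0,1,0]}` and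
`⟨1,0,k⟩ = {[1,t,-k⁻¹] : t} ∪ {[0,1,0]}` for `k ≠ 0`. -/
def lFam1 {p : ℕ} [Fact p.Prime] (f : LpPoint p → α) (g : ZMod p → ZMod p → α) :
    Set (Set α) :=
  {S | S = {x | ∃ t, x = f (C t)} ∪ {f V} ∨
       S = {x | ∃ t, x = f (A t)} ∪ {f V} ∨
       ∃ k : ZMod p, k ≠ 0 ∧ S = {x | ∃ t, x = g t k⁻¹} ∪ {f V}}

/-- The line family `𝓛₂ = {C(j,i) : i,j ∈ Z_p}`. -/
def lFam2 {p : ℕ} (f : LpPoint p → α) (g : ZMod p → ZMod p → α) : Set (Set α) :=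
  {S | ∃ i j : ZMod p, S = cSet f g j i}

/-- The line set `𝓛 = 𝓛₁ ∪ 𝓛₂`. -/
def lFam {p : ℕ} [Fact p.Prime] (f : LpPoint p → α) (g : ZMod p → ZMod p → α) :
    Set (Set α) :=
  lFam1 f g ∪ lFam2 f g

end HarmonicPaper

namespace HarmonicPaper

lemma le_eRk {M : Matroid α} {I S : Set α} (hI : M.Indep I) (hIS : I ⊆ S) :
    I.encard ≤ eRk M S := by
  refine le_trans ?_ (le_iSup _ I); simp [eRk, hI, hIS]

lemma eRk_le {M : Matroid α} {S : Set α} {n : ℕ∞}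
    (h : ∀ I, M.Indep I → I ⊆ S → I.encard ≤ n) : eRk M S ≤ n :=
  iSup_le fun I => iSup_le fun hI => h I hI.1 hI.2

lemma eRk_le_encard (M : Matroid α) (S : Set α) : eRk M S ≤ S.encard :=
  eRk_le fun _ _ hIS => encard_mono hIS

lemma encard_le_of_indep_subset_closure {M : Matroid α} {I J : Set α}
    (hI : M.Indep I) (hJ : M.Indep J) (hIJ : I ⊆ M.closure J) : I.encard ≤ J.encard := by
  obtain ⟨I', hI', hII'⟩ := hI.subset_isBasis_of_subset hIJ (M.closure_subset_ground J)
  exact le_trans (encard_mono hII') (hI'.encard_eq_encard hJ.isBasis_closure).le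

lemma not_indep3_subset_closure {M : Matroid α} {T G : Set α}
    (hT : eRk M T ≤ 2) (hG : M.Indep G) (hG3 : G.encard = 3) (hGT : G ⊆ M.closure T) :
    False := by
  obtain ⟨J, hJ⟩ := M.exists_isBasis' T
  have hJ2 : J.encard ≤ 2 := le_trans (le_eRk hJ.indep hJ.subset) hT
  have := encard_le_of_indep_subset_closure hG hJ.indep (by rwa [hJ.closure_eq_closure])
  rw [hG3] at this
  exact absurd (le_trans this hJ2) (by decide)

lemma encard3 {u v w : α} (huv : u ≠ v) (huw : u ≠ w) (hvw : v ≠ w) :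
    ({u, v, w} : Set α).encard = 3 := by
  rw [encard_insert_of_notMem (by simp [huv, huw]), encard_pair hvw]
  rfl

/-- A point of a rank-≤2 set containing an independent pair is in the closure of the pair. -/
lemma mem_closure_of_collin {M : Matroid α} {S : Set α} {u v w : α}
    (hS : Collin M S) (huv : M.Indep {u, v}) (hne : u ≠ v) (hu : u ∈ S) (hv : v ∈ S)
    (hw : w ∈ S) (hwE : w ∈ M.E) (hwu : w ≠ u) (hwv : w ≠ v) : w ∈ M.closure {u, v} := by
  by_contra hcon
  have hind : M.Indep (insert w {u, v}) := by
    rw [huv.insert_indep_iff]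
    exact Or.inl ⟨hwE, hcon⟩
  have h3 : (insert w {u, v} : Set α).encard = 3 := encard3 hwu hwv hne
  have hsub : (insert w {u, v} : Set α) ⊆ S := by
    intro x hx; rcases hx with rfl | rfl | rfl
    exacts [hw, hu, hv]
  have := le_eRk (S := S) hind hsub
  rw [h3] at this
  exact absurd (le_trans this hS) (by decide)

lemma closure_subset_of_pair {M : Matroid α} {T : Set α} {u v : α}
    (hT : eRk M T ≤ 2) (hTE : T ⊆ M.E) (hp : M.Indep {u, v}) (hne : u ≠ v)
    (hu : u ∈ M.closure T) (hv : v ∈ M.closure T) : M.closure T ⊆ M.closure {u, v} := by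
  intro e he
  by_contra hcon
  have heE : e ∈ M.E := M.closure_subset_ground T he
  have hind : M.Indep (insert e {u, v}) := by
    rw [hp.insert_indep_iff]; exact Or.inl ⟨heE, hcon⟩
  have heu : e ≠ u := by rintro rfl; exact hcon (M.mem_closure_of_mem' (by simp) heE)
  have hev : e ≠ v := by rintro rfl; exact hcon (M.mem_closure_of_mem' (by simp) heE)
  refine not_indep3_subset_closure hT hind (encard3 heu hev hne) ?_
  intro x hx; rcases hx with rfl | rfl | rfl
  exacts [he, hu, hv]

/-- Two "lines" whose union has rank 3 meet in the closure of any common nonloop. -/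
lemma inter_subset_closure_singleton {M : Matroid α} {T T' G : Set α} {w x : α}
    (hT : eRk M T ≤ 2) (hT' : eRk M T' ≤ 2) (hTE : T ⊆ M.E) (hT'E : T' ⊆ M.E)
    (hG : M.Indep G) (hG3 : G.encard = 3) (hGsub : G ⊆ T ∪ T')
    (hw1 : w ∈ M.closure T) (hw2 : w ∈ M.closure T') (hwi : M.Indep {w})
    (hx1 : x ∈ M.closure T) (hx2 : x ∈ M.closure T') : x ∈ M.closure {w} := by
  by_contra hcon
  have hxE : x ∈ M.E := M.closure_subset_ground T hx1
  have hxw : x ≠ w := by rintro rfl; exact hcon (M.mem_closure_of_mem' rfl hxE)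
  have hp : M.Indep {w, x} := by
    have : M.Indep (insert x {w}) := by
      rw [hwi.insert_indep_iff]; exact Or.inl ⟨hxE, hcon⟩
    simpa [Set.pair_comm] using this
  have h1 : M.closure T ⊆ M.closure {w, x} := closure_subset_of_pair hT hTE hp hxw.symm hw1 hx1
  have h2 : M.closure T' ⊆ M.closure {w, x} := closure_subset_of_pair hT' hT'E hp hxw.symm hw2 hx2
  refine not_indep3_subset_closure (M := M) (T := {w, x}) ?_ hG hG3 ?_
  · exact le_trans (eRk_le_encard _ _) (le_of_eq (encard_pair hxw.symm))
  · intro e heG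
    rcases hGsub heG with h | h
    · exact h1 (M.subset_closure T hTE h)
    · exact h2 (M.subset_closure T' hT'E h)

/-- A common point of the closures of two independent singletons forming an
independent pair leads to a contradiction if that point is itself a nonloop. -/
lemma contra_two_pencils {M : Matroid α} {w₁ w₂ x : α}
    (hp : M.Indep {w₁, w₂}) (hne : w₁ ≠ w₂) (hx : M.Indep {x})
    (h1 : x ∈ M.closure {w₁}) (h2 : x ∈ M.closure {w₂}) : False := by
  have hxE : x ∈ M.E := hx.subset_ground rfl
  have hx0 : x ∉ M.closure (∅ : Set α) := by
    intro h
    have := (M.empty_indep.mem_closure_iff').1 h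
    simp at this
    exact absurd (this.2 (by simpa using hx)) id
  have hex : w₁ ∈ M.closure {x} := by
    have := Matroid.closure_exchange (M := M) (e := x) (f := w₁) (X := ∅)
      (by simpa using ⟨h1, hx0⟩)
    simpa using this.1
  have : w₁ ∈ M.closure {w₂} :=
    (M.closure_subset_closure_of_subset_closure (by simpa using h2)) hex
  have hw1 : M.Indep {w₂} := hp.subset (by simp)
  have := (hw1.mem_closure_iff').1 this
  have h2' := this.2 (by simpa [Set.pair_comm] using hp)
  simp at h2'
  exact hne h2'


end HarmonicPaper

namespace HarmonicPaper
open LpPoint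

section Emb

variable {α : Type*} {p : ℕ} [Fact p.Prime] {M : Matroid α} {f : LpPoint p → α}

open LpPoint

lemma lp_mem_ground (hf : IsLpEmbedding p M f) (x : LpPoint p) : f x ∈ M.E :=
  hf.2.1 ⟨x, rfl⟩

lemma lp_indep_singleton (hf : IsLpEmbedding p M f) (x : LpPoint p) : M.Indep {f x} := by
  have := (hf.2.2 {x}).1 (Or.inl (by simp))
  simpa using this

lemma lp_indep_pair (hf : IsLpEmbedding p M f) (x y : LpPoint p) : M.Indep {f x, f y} := by
  have := (hf.2.2 {x, y}).1 (Or.inl (le_trans (encard_insert_le _ _) (by rw [Set.encard_singleton]; exact one_add_one_eq_two.le)))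
  rwa [Set.image_insert_eq, Set.image_singleton] at this

lemma lp_indep3 (hf : IsLpEmbedding p M f) {a b c : LpPoint p}
    (hab : a ≠ b) (hac : a ≠ c) (hbc : b ≠ c)
    (h : ∀ L ∈ LpLines p, ¬(a ∈ L ∧ b ∈ L ∧ c ∈ L)) : M.Indep {f a, f b, f c} := by
  have hI : LpIndep p {a, b, c} := by
    refine Or.inr ⟨encard3 hab hac hbc, fun L hL hsub => h L hL ?_⟩
    exact ⟨hsub (by simp), hsub (by simp), hsub (by simp)⟩
  have := (hf.2.2 _).1 hI
  rwa [Set.image_insert_eq, Set.image_insert_eq, Set.image_singleton] at this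

lemma lp_not_collin3 (hf : IsLpEmbedding p M f) {a b c : LpPoint p}
    (hab : a ≠ b) (hac : a ≠ c) (hbc : b ≠ c)
    (h : ∀ L ∈ LpLines p, ¬(a ∈ L ∧ b ∈ L ∧ c ∈ L)) : ¬ Collin M {f a, f b, f c} := by
  intro hcol
  have hind := lp_indep3 hf hab hac hbc h
  have h3 : ({f a, f b, f c} : Set α).encard = 3 :=
    encard3 (hf.1.ne hab) (hf.1.ne hac) (hf.1.ne hbc)
  have := le_eRk hind (subset_refl _)
  rw [h3] at this
  exact absurd (le_trans this hcol) (by decide)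

lemma lp_collin_of_subset_line (hf : IsLpEmbedding p M f) {L₀ : Set (LpPoint p)} {S₀ : Set (LpPoint p)}
    (hL : L₀ ∈ LpLines p) (hS : S₀ ⊆ L₀) : Collin M (f '' S₀) := by
  refine eRk_le fun I hI hIS => ?_
  obtain ⟨S₁, hS₁, rfl⟩ := Set.subset_image_iff.1 hIS
  have hLp : LpIndep p S₁ := (hf.2.2 S₁).2 hI
  have hcard : S₁.encard ≤ 2 := by
    rcases hLp with h | ⟨_, h⟩
    · exact h
    · exact absurd (hS₁.trans hS) (h L₀ hL)
  rwa [hf.1.injOn.encard_image]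

/-- Lines of `L_p` used below. -/
lemma lpline_short (i j : ZMod p) : ({A i, B (i + j), C j} : Set (LpPoint p)) ∈ LpLines p :=
  Or.inr (Or.inr (Or.inr ⟨i, j, rfl⟩))

lemma lpline_longA : ({x | ∃ i, x = A i} ∪ {V} : Set (LpPoint p)) ∈ LpLines p := Or.inl rfl

lemma lpline_longB : ({x | ∃ i, x = B i} ∪ {V} : Set (LpPoint p)) ∈ LpLines p :=
  Or.inr (Or.inl rfl)

lemma lpline_longC : ({x | ∃ i, x = C i} ∪ {V} : Set (LpPoint p)) ∈ LpLines p :=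
  Or.inr (Or.inr (Or.inl rfl))

lemma collin_short (hf : IsLpEmbedding p M f) (i j : ZMod p) :
    Collin M {f (A i), f (B (i + j)), f (C j)} := by
  have := lp_collin_of_subset_line hf (lpline_short i j) (subset_refl _)
  rwa [Set.image_insert_eq, Set.image_insert_eq, Set.image_singleton] at this

/-- Triples not on any line of `L_p`. -/
lemma noline_AAw {i l : ZMod p} {w : LpPoint p} (hil : i ≠ l) (hw : ∀ m, w ≠ A m)
    (hwV : w ≠ V) : ∀ L ∈ LpLines p, ¬(A i ∈ L ∧ A l ∈ L ∧ w ∈ L) := by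
  rintro L (rfl | rfl | rfl | ⟨a, b, rfl⟩) ⟨h1, h2, h3⟩
  · rcases h3 with ⟨m, rfl⟩ | rfl
    · exact hw m rfl
    · exact hwV rfl
  · simp at h1
  · simp at h1
  · simp only [Set.mem_insert_iff, Set.mem_singleton_iff] at h1 h2
    rcases h1 with h1 | h1 | h1 <;> rcases h2 with h2 | h2 | h2 <;>
      simp_all

lemma noline_CCw {i l : ZMod p} {w : LpPoint p} (hil : i ≠ l) (hw : ∀ m, w ≠ C m)
    (hwV : w ≠ V) : ∀ L ∈ LpLines p, ¬(C i ∈ L ∧ C l ∈ L ∧ w ∈ L) := by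
  rintro L (rfl | rfl | rfl | ⟨a, b, rfl⟩) ⟨h1, h2, h3⟩
  · simp at h1
  · simp at h1
  · rcases h3 with ⟨m, rfl⟩ | rfl
    · exact hw m rfl
    · exact hwV rfl
  · simp only [Set.mem_insert_iff, Set.mem_singleton_iff] at h1 h2
    rcases h1 with h1 | h1 | h1 <;> rcases h2 with h2 | h2 | h2 <;>
      simp_all

lemma noline_BBw {i l : ZMod p} {w : LpPoint p} (hil : i ≠ l) (hw : ∀ m, w ≠ B m)
    (hwV : w ≠ V) : ∀ L ∈ LpLines p, ¬(B i ∈ L ∧ B l ∈ L ∧ w ∈ L) := by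
  rintro L (rfl | rfl | rfl | ⟨a, b, rfl⟩) ⟨h1, h2, h3⟩
  · simp at h1
  · rcases h3 with ⟨m, rfl⟩ | rfl
    · exact hw m rfl
    · exact hwV rfl
  · simp at h1
  · simp only [Set.mem_insert_iff, Set.mem_singleton_iff] at h1 h2
    rcases h1 with h1 | h1 | h1 <;> rcases h2 with h2 | h2 | h2 <;>
      simp_all

lemma noline_ABC {i m j : ZMod p} (hm : m ≠ i + j) :
    ∀ L ∈ LpLines p, ¬(A i ∈ L ∧ B m ∈ L ∧ C j ∈ L) := by
  rintro L (rfl | rfl | rfl | ⟨a, b, rfl⟩) ⟨h1, h2, h3⟩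
  · simp at h2
  · simp at h1
  · simp at h1
  · simp only [Set.mem_insert_iff, Set.mem_singleton_iff] at h1 h2 h3
    simp_all

lemma noline_VAC {i j : ZMod p} :
    ∀ L ∈ LpLines p, ¬(V ∈ L ∧ A i ∈ L ∧ C j ∈ L) := by
  rintro L (rfl | rfl | rfl | ⟨a, b, rfl⟩) ⟨h1, h2, h3⟩
  · simp at h3
  · simp at h2
  · simp at h2
  · simp at h1

/-! ### Harmonic closure is inside the matroid closure -/

lemma hIter_subset_closure (M : Matroid α) {S : Set α} (hS : S ⊆ M.E) :
    ∀ n, hIter M n S ⊆ M.closure S := by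
  intro n
  induction n with
  | zero => exact M.subset_closure S hS
  | succ n ih =>
    show hStep M (hIter M n S) ⊆ M.closure S
    refine Set.union_subset ih ?_
    rintro x ⟨a, ha, b, hb, c, hc, o, q, r, s, hHP, hcl⟩
    have hx : x ∈ M.closure {a, c} ∩ M.closure {o, r} := by rw [hcl]; rfl
    have hac : ({a, c} : Set α) ⊆ M.closure S := by
      intro t ht; rcases ht with rfl | rfl
      exacts [ih ha, ih hc]
    have := M.closure_subset_closure_of_subset_closure hac
    exact this hx.1

lemma hCl_subset_closure (M : Matroid α) {S : Set α} (hS : S ⊆ M.E) :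
    hCl M S ⊆ M.closure S :=
  Set.iUnion_subset (hIter_subset_closure M hS)

lemma subset_hCl (M : Matroid α) (S : Set α) : S ⊆ hCl M S :=
  Set.subset_iUnion_of_subset 0 (by exact subset_refl S)

lemma lineJI_subset (hf : IsLpEmbedding p M f) (j i : ZMod p) :
    lineJI M f j i ⊆ M.closure {f (A i), f (B (i + j)), f (C j)} := by
  have himg : f '' ({A i, B (i + j), C j} : Set (LpPoint p)) =
      {f (A i), f (B (i + j)), f (C j)} := by
    rw [Set.image_insert_eq, Set.image_insert_eq, Set.image_singleton]
  have hsub : f '' ({A i, B (i + j), C j} : Set (LpPoint p)) ⊆ M.E := by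
    rintro x ⟨u, _, rfl⟩; exact lp_mem_ground hf u
  refine subset_trans (hCl_subset_closure M hsub) ?_
  rw [himg]

lemma mem_lineJI_A (j i : ZMod p) : f (A i) ∈ lineJI M f j i :=
  subset_hCl M _ ⟨A i, by simp, rfl⟩

/-! ### ZMod facts -/

lemma zmod_one_ne_zero : (1 : ZMod p) ≠ 0 := one_ne_zero

lemma zmod_two_ne_zero (hodd : p ≠ 2) : (2 : ZMod p) ≠ 0 := by
  intro h
  have : ((2 : ℕ) : ZMod p) = 0 := by exact_mod_cast h
  rw [ZMod.natCast_eq_zero_iff] at this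
  have hp2 : p ≤ 2 := Nat.le_of_dvd (by norm_num) this
  have := (Fact.out : p.Prime).two_le
  omega

lemma zmod_two_ne_one (hodd : p ≠ 2) : (2 : ZMod p) ≠ 1 := by
  intro h
  have h0 : (2 : ZMod p) - 1 = 0 := sub_eq_zero.2 h
  norm_num at h0

/-! ### The seven-point harmonic configuration -/

/-- Generic fact: three distinct elements of a set of the form `{x,y,z}` exhaust it. -/
lemma triple_eq_of_subset {β : Type*} {a b c x y z : β}
    (hab : a ≠ b) (hac : a ≠ c) (hbc : b ≠ c)
    (ha : a ∈ ({x, y, z} : Set β)) (hb : b ∈ ({x, y, z} : Set β))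
    (hc : c ∈ ({x, y, z} : Set β)) : ({a, b, c} : Set β) = {x, y, z} := by
  refine Set.Finite.eq_of_subset_of_encard_le (Set.toFinite _) ?_ ?_
  · intro t ht; rcases ht with rfl | rfl | rfl
    exacts [ha, hb, hc]
  · rw [encard3 hab hac hbc]
    calc ({x, y, z} : Set β).encard ≤ ({y, z} : Set β).encard + 1 := Set.encard_insert_le _ _
      _ ≤ ({z} : Set β).encard + 1 + 1 := add_le_add (Set.encard_insert_le _ _) le_rfl
      _ ≤ 3 := by rw [Set.encard_singleton]; decide

/-- The seven points of the harmonic configuration in `L_p`. -/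
def conf7 (p : ℕ) : Set (LpPoint p) := {V, A 1, A 0, C 1, C 0, B 0, B 1}

lemma collin_triple_of_line (hf : IsLpEmbedding p M f) {L₀ : Set (LpPoint p)}
    {u v w : LpPoint p} (hL : L₀ ∈ LpLines p) (h1 : u ∈ L₀) (h2 : v ∈ L₀) (h3 : w ∈ L₀) :
    Collin M {f u, f v, f w} := by
  have := lp_collin_of_subset_line hf (S₀ := {u, v, w}) hL
    (by intro t ht; rcases ht with rfl | rfl | rfl; exacts [h1, h2, h3])
  rwa [Set.image_insert_eq, Set.image_insert_eq, Set.image_singleton] at this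

lemma classify7 (hodd : p ≠ 2) {a b c : LpPoint p}
    (ha : a ∈ conf7 p) (hb : b ∈ conf7 p) (hc : c ∈ conf7 p)
    (hab : a ≠ b) (hac : a ≠ c) (hbc : b ≠ c)
    (hL : ∃ L ∈ LpLines p, a ∈ L ∧ b ∈ L ∧ c ∈ L) :
    ({a, b, c} : Set (LpPoint p)) ∈
      ({{V, A 1, A 0}, {V, C 1, C 0}, {V, B 0, B 1}, {A 0, C 1, B 1},
        {A 0, C 0, B 0}, {A 1, C 0, B 1}} : Set (Set (LpPoint p))) := by
  obtain ⟨L, hLmem, h1, h2, h3⟩ := hL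
  have hmem : ∀ x ∈ conf7 p, ∀ S : Set (LpPoint p), x ∈ S → x ∈ S := fun _ _ _ h => h
  rcases hLmem with rfl | rfl | rfl | ⟨i, j, rfl⟩
  · -- long A line
    have key : ∀ x ∈ conf7 p, x ∈ ({y | ∃ i, y = A i} ∪ {V} : Set (LpPoint p)) →
        x ∈ ({V, A 1, A 0} : Set (LpPoint p)) := by
      intro x hx hxL
      rcases hx with rfl | rfl | rfl | rfl | rfl | rfl | rfl <;> simp_all
    have := triple_eq_of_subset hab hac hbc (key a ha h1) (key b hb h2) (key c hc h3)
    rw [this]; simp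
  · -- long B line
    have key : ∀ x ∈ conf7 p, x ∈ ({y | ∃ i, y = B i} ∪ {V} : Set (LpPoint p)) →
        x ∈ ({V, B 0, B 1} : Set (LpPoint p)) := by
      intro x hx hxL
      rcases hx with rfl | rfl | rfl | rfl | rfl | rfl | rfl <;> simp_all
    have := triple_eq_of_subset hab hac hbc (key a ha h1) (key b hb h2) (key c hc h3)
    rw [this]; simp
  · -- long C line
    have key : ∀ x ∈ conf7 p, x ∈ ({y | ∃ i, y = C i} ∪ {V} : Set (LpPoint p)) →
        x ∈ ({V, C 1, C 0} : Set (LpPoint p)) := by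
      intro x hx hxL
      rcases hx with rfl | rfl | rfl | rfl | rfl | rfl | rfl <;> simp_all
    have := triple_eq_of_subset hab hac hbc (key a ha h1) (key b hb h2) (key c hc h3)
    rw [this]; simp
  · -- short line
    have heq : ({a, b, c} : Set (LpPoint p)) = {A i, B (i + j), C j} :=
      triple_eq_of_subset hab hac hbc h1 h2 h3
    have hAmem : A i ∈ conf7 p := by
      have : A i ∈ ({a, b, c} : Set (LpPoint p)) := by rw [heq]; simp
      rcases this with rfl | rfl | rfl
      exacts [ha, hb, hc]
    have hBmem : B (i + j) ∈ conf7 p := by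
      have : B (i + j) ∈ ({a, b, c} : Set (LpPoint p)) := by rw [heq]; simp
      rcases this with rfl | rfl | rfl
      exacts [ha, hb, hc]
    have hCmem : C j ∈ conf7 p := by
      have : C j ∈ ({a, b, c} : Set (LpPoint p)) := by rw [heq]; simp
      rcases this with rfl | rfl | rfl
      exacts [ha, hb, hc]
    have hi : i = 1 ∨ i = 0 := by
      rcases hAmem with h | h | h | h | h | h | h <;> simp_all
    have hj : j = 1 ∨ j = 0 := by
      rcases hCmem with h | h | h | h | h | h | h <;> simp_all
    have hij : i + j = 0 ∨ i + j = 1 := by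
      rcases hBmem with h | h | h | h | h | h | h <;> simp_all
    rw [heq]
    rcases hi with rfl | rfl <;> rcases hj with rfl | rfl
    · exfalso
      rcases hij with h | h
      · exact zmod_two_ne_zero hodd (by linear_combination h)
      · exact zmod_two_ne_one hodd (by linear_combination h)
    · -- i = 1, j = 0 : {A 1, B 1, C 0}
      have : ({A 1, B (1 + 0), C 0} : Set (LpPoint p)) = {A 1, C 0, B 1} := by
        norm_num; ext t; simp; tauto
      rw [this]; simp
    · -- i = 0, j = 1 : {A 0, B 1, C 1}
      have : ({A 0, B (0 + 1), C 1} : Set (LpPoint p)) = {A 0, C 1, B 1} := by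
        norm_num; ext t; simp; tauto
      rw [this]; simp
    · -- i = 0, j = 0 : {A 0, B 0, C 0}
      have : ({A 0, B (0 + 0), C 0} : Set (LpPoint p)) = {A 0, C 0, B 0} := by
        norm_num; ext t; simp; tauto
      rw [this]; simp

lemma eRk_pair_eq_two {M : Matroid α} {u v : α} (hind : M.Indep {u, v}) (hne : u ≠ v) :
    eRk M {u, v} = 2 := by
  refine le_antisymm (le_trans (eRk_le_encard _ _) (le_of_eq (encard_pair hne))) ?_
  have := le_eRk hind (subset_refl _)
  rwa [encard_pair hne] at this

lemma image_conf7 (f : LpPoint p → α) :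
    ({f V, f (A 1), f (A 0), f (C 1), f (C 0), f (B 0), f (B 1)} : Set α) = f '' conf7 p := by
  simp [conf7, Set.image_insert_eq]

lemma loop_mem_closure {M : Matroid α} {e : α} (heE : e ∈ M.E) (hloop : ¬ M.Indep {e})
    (X : Set α) : e ∈ M.closure X := by
  obtain ⟨J, hJ⟩ := M.exists_isBasis' X
  rw [← hJ.closure_eq_closure]
  rw [hJ.indep.mem_closure_iff']
  exact ⟨heE, fun hind => absurd (hind.subset (by simp)) hloop⟩

lemma hp_config (hodd : p ≠ 2) (hf : IsLpEmbedding p M f) :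
    HP M (f V) (f (A 1)) (f (A 0)) (f (C 1)) (f (C 0)) (f (B 0)) (f (B 1)) := by
  have hne : ∀ u v : LpPoint p, u ≠ v → f u ≠ f v := fun u v h => hf.1.ne h
  have h7 := image_conf7 f
  refine ⟨?_, ?_, ?_, ?_, ?_⟩
  · show List.Pairwise _ (List.map f [V, A 1, A 0, C 1, C 0, B 0, B 1])
    rw [List.pairwise_map]
    refine List.Pairwise.imp (fun h => hne _ _ h) ?_
    simp [List.pairwise_cons, one_ne_zero, zero_ne_one]
  · intro t ht
    rcases ht with rfl | rfl | rfl | rfl | rfl | rfl | rfl <;> exact lp_mem_ground hf _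
  · refine le_antisymm ?_ ?_
    · rw [h7]
      refine eRk_le fun I hI hIS => ?_
      obtain ⟨S₁, hS₁, rfl⟩ := Set.subset_image_iff.1 hIS
      have hLp : LpIndep p S₁ := (hf.2.2 S₁).2 hI
      rw [hf.1.injOn.encard_image]
      rcases hLp with h | ⟨h, _⟩
      · exact le_trans h (by decide)
      · exact le_of_eq h
    · have hind : M.Indep {f V, f (A 0), f (C 0)} :=
        lp_indep3 hf (by simp) (by simp) (by simp) noline_VAC
      have hsub : ({f V, f (A 0), f (C 0)} : Set α) ⊆
          {f V, f (A 1), f (A 0), f (C 1), f (C 0), f (B 0), f (B 1)} := by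
        intro t ht; rcases ht with rfl | rfl | rfl <;> simp
      have := le_eRk hind hsub
      rwa [encard3 (hne _ _ (by simp)) (hne _ _ (by simp)) (hne _ _ (by simp))] at this
  · intro a ha b hb hab
    rw [h7] at ha hb
    obtain ⟨a₀, ha₀, rfl⟩ := ha
    obtain ⟨b₀, hb₀, rfl⟩ := hb
    exact eRk_pair_eq_two (lp_indep_pair hf a₀ b₀) hab
  · refine Or.inl ?_
    intro a ha b hb c hc hab hac hbc
    rw [h7] at ha hb hc
    obtain ⟨a₀, ha₀, rfl⟩ := ha
    obtain ⟨b₀, hb₀, rfl⟩ := hb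
    obtain ⟨c₀, hc₀, rfl⟩ := hc
    have hab₀ : a₀ ≠ b₀ := fun h => hab (congrArg f h)
    have hac₀ : a₀ ≠ c₀ := fun h => hac (congrArg f h)
    have hbc₀ : b₀ ≠ c₀ := fun h => hbc (congrArg f h)
    have himg3 : ({f a₀, f b₀, f c₀} : Set α) = f '' {a₀, b₀, c₀} := by
      rw [Set.image_insert_eq, Set.image_insert_eq, Set.image_singleton]
    constructor
    · intro hcol
      by_cases hex : ∃ L ∈ LpLines p, a₀ ∈ L ∧ b₀ ∈ L ∧ c₀ ∈ L
      · have hcls := classify7 hodd ha₀ hb₀ hc₀ hab₀ hac₀ hbc₀ hex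
        simp only [Set.mem_insert_iff, Set.mem_singleton_iff] at hcls
        rcases hcls with h | h | h | h | h | h <;>
          rw [himg3, h, Set.image_insert_eq, Set.image_insert_eq, Set.image_singleton] <;>
          simp [nonFanoLines]
      · push_neg at hex
        exact absurd hcol (lp_not_collin3 hf hab₀ hac₀ hbc₀ fun L hL h => hex L hL h.1 h.2.1 h.2.2)
    · intro hmem
      simp only [nonFanoLines, Set.mem_insert_iff, Set.mem_singleton_iff] at hmem
      rcases hmem with h | h | h | h | h | h <;> rw [h]
      · exact collin_triple_of_line hf lpline_longA (by simp) (by simp) (by simp)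
      · exact collin_triple_of_line hf lpline_longC (by simp) (by simp) (by simp)
      · exact collin_triple_of_line hf lpline_longB (by simp) (by simp) (by simp)
      · exact collin_triple_of_line hf (lpline_short 0 1) (by simp) (by simp) (by simp)
      · exact collin_triple_of_line hf (lpline_short 0 0) (by simp) (by simp) (by simp)
      · exact collin_triple_of_line hf (lpline_short 1 0) (by simp) (by simp) (by simp)

lemma no_loops (hodd : p ≠ 2) (hM : IsHarmonic M) (hf : IsLpEmbedding p M f) :
    ∀ e ∈ M.E, M.Indep {e} := by
  intro e heE
  by_contra hloop
  obtain ⟨x', hx'⟩ := hM.1 _ _ _ _ _ _ _ (hp_config hodd hf)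
  have hm1 : (-1 : ZMod p) ≠ 0 := neg_ne_zero.2 one_ne_zero
  have hw1 : f (A (-1)) ∈ M.closure {f V, f (A 0)} := by
    refine mem_closure_of_collin
      (collin_triple_of_line hf lpline_longA (u := V) (v := A 0) (w := A (-1))
        (by simp) (by simp) (by simp))
      (lp_indep_pair hf V (A 0)) (hf.1.ne (by simp)) (by simp) (by simp) (by simp)
      (lp_mem_ground hf _) (hf.1.ne (by simp)) (hf.1.ne (by simp [hm1]))
  have hw2 : f (A (-1)) ∈ M.closure {f (C 1), f (B 0)} := by
    refine mem_closure_of_collin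
      (collin_triple_of_line hf (lpline_short (-1) 1) (u := C 1) (v := B 0) (w := A (-1))
        (by simp) (by simp) (by simp))
      (lp_indep_pair hf (C 1) (B 0)) (hf.1.ne (by simp)) (by simp) (by simp) (by simp)
      (lp_mem_ground hf _) (hf.1.ne (by simp)) (hf.1.ne (by simp))
  have he1 : e ∈ ({x'} : Set α) := by
    rw [← hx']
    exact ⟨loop_mem_closure heE hloop _, loop_mem_closure heE hloop _⟩
  have he2 : f (A (-1)) ∈ ({x'} : Set α) := by
    rw [← hx']
    exact ⟨hw1, hw2⟩
  rw [Set.mem_singleton_iff] at he1 he2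
  rw [he1, ← he2] at hloop
  exact hloop (lp_indep_singleton hf _)

/-! ### Key family accessors -/

variable {g : ZMod p → ZMod p → α}

lemma zmod_succ_ne (x : ZMod p) : x + 1 ≠ x := by
  intro h
  nth_rewrite 2 [← add_zero x] at h
  exact one_ne_zero (add_left_cancel h)

lemma key_collin (hg : IsKeyFamily M f g) (s k I : ZMod p) :
    Collin M {f (A I), f (C (s + k * I)), g s k} := by
  have := hg.2.2.2 k 0 s I
  simpa using this

lemma key_mem_lineJI (hg : IsKeyFamily M f g) (s k I : ZMod p) :
    g s k ∈ lineJI M f (s + k * I) I := by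
  have h3 := hg.2.2.1 k I (s + k * I)
  have hs : s + k * I - k * I = s := by ring
  rw [hs] at h3
  have hmem : g s k ∈ ⋂ t, lineJI M f ((s + k * I) + k * t) (I + t) := by rw [h3]; rfl
  have := Set.mem_iInter.1 hmem 0
  simpa using this

lemma key_pencil (hf : IsLpEmbedding p M f) (hg : IsKeyFamily M f g) (s k I : ZMod p) :
    g s k ∈ M.closure {f (A I), f (B (I + (s + k * I))), f (C (s + k * I))} :=
  lineJI_subset hf _ _ (key_mem_lineJI hg s k I)

lemma key_mem_ground (hf : IsLpEmbedding p M f) (hg : IsKeyFamily M f g) (s k : ZMod p) :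
    g s k ∈ M.E :=
  M.closure_subset_ground _ (key_pencil hf hg s k 0)

/-! ### reordered "no line" lemmas -/

lemma noline_ACA {i j l : ZMod p} (hil : i ≠ l) :
    ∀ L ∈ LpLines p, ¬(A i ∈ L ∧ C j ∈ L ∧ A l ∈ L) :=
  fun L hL h => noline_AAw hil (w := C j) (by simp) (by simp) L hL ⟨h.1, h.2.2, h.2.1⟩

lemma noline_ACC {i j t : ZMod p} (hjt : j ≠ t) :
    ∀ L ∈ LpLines p, ¬(A i ∈ L ∧ C j ∈ L ∧ C t ∈ L) :=
  fun L hL h => noline_CCw hjt (w := A i) (by simp) (by simp) L hL ⟨h.2.1, h.2.2, h.1⟩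

lemma noline_ACB {i j m : ZMod p} (hm : m ≠ i + j) :
    ∀ L ∈ LpLines p, ¬(A i ∈ L ∧ C j ∈ L ∧ B m ∈ L) :=
  fun L hL h => noline_ABC hm L hL ⟨h.1, h.2.2, h.2.1⟩

lemma noline_ABB {i m t : ZMod p} (hmt : m ≠ t) :
    ∀ L ∈ LpLines p, ¬(A i ∈ L ∧ B m ∈ L ∧ B t ∈ L) :=
  fun L hL h => noline_BBw hmt (w := A i) (by simp) (by simp) L hL ⟨h.2.1, h.2.2, h.1⟩

lemma noline_ACV {i j : ZMod p} :
    ∀ L ∈ LpLines p, ¬(A i ∈ L ∧ C j ∈ L ∧ V ∈ L) :=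
  fun L hL h => noline_VAC L hL ⟨h.2.2, h.1, h.2.1⟩

/-! ### The points `g s k` are distinct from the points of `L_p` (in the relevant cases) -/

lemma g_ne_V (hf : IsLpEmbedding p M f) (hg : IsKeyFamily M f g) (s k : ZMod p) :
    g s k ≠ f V := by
  intro h
  have hcol := key_collin hg s k 0
  rw [h, mul_zero, add_zero] at hcol
  exact lp_not_collin3 hf (by simp) (by simp) (by simp) noline_ACV hcol

lemma g_ne_A (hf : IsLpEmbedding p M f) (hg : IsKeyFamily M f g) (s k l : ZMod p) :
    g s k ≠ f (A l) := by
  intro h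
  have hcol := key_collin hg s k (l + 1)
  rw [h] at hcol
  refine lp_not_collin3 hf (by simp) ?_ (by simp) (noline_ACA (zmod_succ_ne l)) hcol
  simp [zmod_succ_ne l]

lemma g_ne_C (hf : IsLpEmbedding p M f) (hg : IsKeyFamily M f g) {k : ZMod p}
    (hk : k ≠ 0) (s τ : ZMod p) : g s k ≠ f (C τ) := by
  intro h
  have hcol := key_collin hg s k (k⁻¹ * (τ - s + 1))
  have hsk : s + k * (k⁻¹ * (τ - s + 1)) = τ + 1 := by
    rw [mul_inv_cancel_left₀ hk]; ring
  rw [h, hsk] at hcol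
  exact lp_not_collin3 hf (by simp) (by simp) (by simp [zmod_succ_ne τ])
    (noline_ACC (zmod_succ_ne τ)) hcol

lemma g_ne_B (hf : IsLpEmbedding p M f) (hg : IsKeyFamily M f g) {k : ZMod p}
    (hk1 : k ≠ -1) (s τ : ZMod p) : g s k ≠ f (B τ) := by
  intro h
  have hk1' : 1 + k ≠ 0 := by
    intro h0; exact hk1 (by linear_combination h0)
  set I := (1 + k)⁻¹ * (τ - s + 1) with hI
  have hcol := key_collin hg s k I
  rw [h] at hcol
  have hne : τ ≠ I + (s + k * I) := by
    intro h0
    have h1 : (1 + k) * I = τ - s + 1 := mul_inv_cancel_left₀ hk1' _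
    have : τ + 1 = τ := by linear_combination -h0 - h1
    exact zmod_succ_ne τ this
  exact lp_not_collin3 hf (by simp) (by simp) (by simp) (noline_ACB hne) hcol

lemma triple_sub_E (hf : IsLpEmbedding p M f) (u v w : LpPoint p) :
    ({f u, f v, f w} : Set α) ⊆ M.E := by
  intro t ht; rcases ht with rfl | rfl | rfl <;> exact lp_mem_ground hf _

/-- Main lemma I : `g s k` lies on no line `⟨j,-1,i⟩` other than those prescribed. -/
lemma g_not_mem_lineJI (hodd : p ≠ 2) (hM : IsHarmonic M) (hf : IsLpEmbedding p M f)
    (hg : IsKeyFamily M f g) {s k j i : ZMod p} (hs : s ≠ j - k * i) :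
    g s k ∉ lineJI M f j i := by
  intro hmem
  have hclT' : g s k ∈ M.closure {f (A i), f (B (i + j)), f (C j)} := lineJI_subset hf j i hmem
  have hT'col : Collin M {f (A i), f (B (i + j)), f (C j)} := collin_short hf i j
  have hT'E := triple_sub_E hf (A i) (B (i + j)) (C j)
  have hsubcl := M.subset_closure _ hT'E
  by_cases hk0 : k = 0
  · subst hk0
    rw [zero_mul, sub_zero] at hs
    rw [hg.1 s] at hclT'
    refine not_indep3_subset_closure (G := {f (A i), f (C j), f (C s)}) hT'col
      (lp_indep3 hf (by simp) (by simp) (by simp [Ne.symm hs]) (noline_ACC (Ne.symm hs)))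
      (encard3 (hf.1.ne (by simp)) (hf.1.ne (by simp)) (hf.1.ne (by simp [Ne.symm hs]))) ?_
    intro u hu
    rcases hu with rfl | rfl | rfl
    · exact hsubcl (by simp)
    · exact hsubcl (by simp)
    · exact hclT'
  by_cases hk1 : k = -1
  · subst hk1
    have hs' : i + j ≠ s := by
      intro h0; exact hs (by linear_combination -h0)
    rw [hg.2.1 s] at hclT'
    refine not_indep3_subset_closure (G := {f (A i), f (B (i + j)), f (B s)}) hT'col
      (lp_indep3 hf (by simp) (by simp) (by simp [hs']) (noline_ABB hs'))
      (encard3 (hf.1.ne (by simp)) (hf.1.ne (by simp)) (hf.1.ne (by simp [hs']))) ?_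
    intro u hu
    rcases hu with rfl | rfl | rfl
    · exact hsubcl (by simp)
    · exact hsubcl (by simp)
    · exact hclT'
  · have hk1' : (1 : ZMod p) + k ≠ 0 := fun h0 => hk1 (by linear_combination h0)
    have hsj : s + k * i ≠ j := fun h0 => hs (by linear_combination h0)
    have hT1col := collin_short hf i (s + k * i)
    have hT1E := triple_sub_E hf (A i) (B (i + (s + k * i))) (C (s + k * i))
    have hx1 : g s k ∈ M.closure {f (A i), f (B (i + (s + k * i))), f (C (s + k * i))} :=
      key_pencil hf hg s k i
    have hstep1 : g s k ∈ M.closure {f (A i)} :=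
      inter_subset_closure_singleton (w := f (A i))
        (G := {f (A i), f (C (s + k * i)), f (C j)}) hT1col hT'col hT1E hT'E
        (lp_indep3 hf (by simp) (by simp) (by simp [hsj]) (noline_ACC hsj))
        (encard3 (hf.1.ne (by simp)) (hf.1.ne (by simp)) (hf.1.ne (by simp [hsj])))
        (by intro u hu; rcases hu with rfl | rfl | rfl
            · exact Or.inl (by simp)
            · exact Or.inl (by simp)
            · exact Or.inr (by simp))
        (M.subset_closure _ hT1E (by simp)) (hsubcl (by simp))
        (lp_indep_singleton hf _) hx1 hclT'
    set I' := (1 + k)⁻¹ * (i + j - s) with hI'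
    have h1 : (1 + k) * I' = i + j - s := by rw [hI']; exact mul_inv_cancel_left₀ hk1' _
    have hB : I' + (s + k * I') = i + j := by linear_combination h1
    have hI'i : i ≠ I' := by
      intro h0
      rw [← h0] at h1
      exact hs (by linear_combination h1)
    have hx2 : g s k ∈ M.closure {f (A I'), f (B (i + j)), f (C (s + k * I'))} := by
      have := key_pencil hf hg s k I'
      rwa [hB] at this
    have hT2col : Collin M {f (A I'), f (B (i + j)), f (C (s + k * I'))} := by
      have := collin_short hf I' (s + k * I')
      rwa [hB] at this
    have hT2E := triple_sub_E hf (A I') (B (i + j)) (C (s + k * I'))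
    have hstep2 : g s k ∈ M.closure {f (B (i + j))} :=
      inter_subset_closure_singleton (w := f (B (i + j)))
        (G := {f (A i), f (A I'), f (C j)}) hT2col hT'col hT2E hT'E
        (lp_indep3 hf (by simp [hI'i]) (by simp) (by simp) (noline_AAw hI'i (by simp) (by simp)))
        (encard3 (hf.1.ne (by simp [hI'i])) (hf.1.ne (by simp)) (hf.1.ne (by simp)))
        (by intro u hu; rcases hu with rfl | rfl | rfl
            · exact Or.inr (by simp)
            · exact Or.inl (by simp)
            · exact Or.inr (by simp))
        (M.subset_closure _ hT2E (by simp)) (hsubcl (by simp))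
        (lp_indep_singleton hf _) hx2 hclT'
    exact contra_two_pencils (lp_indep_pair hf (A i) (B (i + j))) (hf.1.ne (by simp))
      (no_loops hodd hM hf _ (M.closure_subset_ground _ hclT')) hstep1 hstep2

/-- Main lemma II : the points `g s k` for different `k` are distinct. -/
lemma g_ne_g (hodd : p ≠ 2) (hM : IsHarmonic M) (hf : IsLpEmbedding p M f)
    (hg : IsKeyFamily M f g) {s k t k' : ZMod p} (hkk' : k ≠ k') : g s k ≠ g t k' := by
  intro h
  by_cases hk0 : k = 0
  · subst hk0
    rw [hg.1 s] at h
    exact g_ne_C hf hg (Ne.symm hkk') t s h.symm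
  by_cases hk'0 : k' = 0
  · subst hk'0
    rw [hg.1 t] at h
    exact g_ne_C hf hg hk0 s t h
  by_cases hk1 : k = -1
  · subst hk1
    rw [hg.2.1 s] at h
    exact g_ne_B hf hg (Ne.symm hkk') t s h.symm
  by_cases hk'1 : k' = -1
  · subst hk'1
    rw [hg.2.1 t] at h
    exact g_ne_B hf hg hk1 s t h
  have hkk : k - k' ≠ 0 := sub_ne_zero.2 hkk'
  set a := (k - k')⁻¹ * (t - s) + 1 with ha
  have hca : s + k * a ≠ t + k' * a := by
    intro h0
    have h1 : (k - k') * ((k - k')⁻¹ * (t - s)) = t - s := mul_inv_cancel_left₀ hkk _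
    exact hkk (by linear_combination h0 - h1 - (k - k') * ha)
  have hT1col := collin_short hf a (s + k * a)
  have hT2col := collin_short hf a (t + k' * a)
  have hT1E := triple_sub_E hf (A a) (B (a + (s + k * a))) (C (s + k * a))
  have hT2E := triple_sub_E hf (A a) (B (a + (t + k' * a))) (C (t + k' * a))
  have hx2a : g s k ∈ M.closure {f (A a), f (B (a + (t + k' * a))), f (C (t + k' * a))} := by
    rw [h]; exact key_pencil hf hg t k' a
  have hstep1 : g s k ∈ M.closure {f (A a)} :=
    inter_subset_closure_singleton (w := f (A a))
      (G := {f (A a), f (C (s + k * a)), f (C (t + k' * a))}) hT1col hT2col hT1E hT2E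
      (lp_indep3 hf (by simp) (by simp) (by simp [hca]) (noline_ACC hca))
      (encard3 (hf.1.ne (by simp)) (hf.1.ne (by simp)) (hf.1.ne (by simp [hca])))
      (by intro u hu; rcases hu with rfl | rfl | rfl
          · exact Or.inl (by simp)
          · exact Or.inl (by simp)
          · exact Or.inr (by simp))
      (M.subset_closure _ hT1E (by simp)) (M.subset_closure _ hT2E (by simp))
      (lp_indep_singleton hf _) (key_pencil hf hg s k a) hx2a
  set I := (k - k')⁻¹ * (t - s + k') with hI2
  have h1 : (k - k') * I = t - s + k' := by rw [hI2]; exact mul_inv_cancel_left₀ hkk _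
  have hc2 : t + k' * (I + 1) = s + k * I := by linear_combination -h1
  have hII : I ≠ I + 1 := Ne.symm (zmod_succ_ne I)
  have hT3col := collin_short hf I (s + k * I)
  have hT3E := triple_sub_E hf (A I) (B (I + (s + k * I))) (C (s + k * I))
  have hT4col : Collin M {f (A (I + 1)), f (B ((I + 1) + (s + k * I))), f (C (s + k * I))} := by
    have := collin_short hf (I + 1) (t + k' * (I + 1))
    rwa [hc2] at this
  have hT4E := triple_sub_E hf (A (I + 1)) (B ((I + 1) + (s + k * I))) (C (s + k * I))
  have hx4 : g s k ∈ M.closure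
      {f (A (I + 1)), f (B ((I + 1) + (s + k * I))), f (C (s + k * I))} := by
    rw [h]
    have := key_pencil hf hg t k' (I + 1)
    rwa [hc2] at this
  have hstep2 : g s k ∈ M.closure {f (C (s + k * I))} :=
    inter_subset_closure_singleton (w := f (C (s + k * I)))
      (G := {f (A I), f (A (I + 1)), f (C (s + k * I))}) hT3col hT4col hT3E hT4E
      (lp_indep3 hf (by simp [hII]) (by simp) (by simp)
        (fun L hL hmm => noline_AAw hII (w := C (s + k * I)) (by simp) (by simp) L hL
          ⟨hmm.1, hmm.2.1, hmm.2.2⟩))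
      (encard3 (hf.1.ne (by simp [hII])) (hf.1.ne (by simp)) (hf.1.ne (by simp)))
      (by intro u hu; rcases hu with rfl | rfl | rfl
          · exact Or.inl (by simp)
          · exact Or.inr (by simp)
          · exact Or.inl (by simp))
      (M.subset_closure _ hT3E (by simp)) (M.subset_closure _ hT4E (by simp))
      (lp_indep_singleton hf _) (key_pencil hf hg s k I) hx4
  exact contra_two_pencils (lp_indep_pair hf (A a) (C (s + k * I))) (hf.1.ne (by simp))
    (no_loops hodd hM hf _ (key_mem_ground hf hg s k)) hstep1 hstep2

lemma fA_not_mem_lineJI (hf : IsLpEmbedding p M f) {l j i : ZMod p} (hli : l ≠ i) :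
    f (A l) ∉ lineJI M f j i := by
  intro hmem
  have hcl := lineJI_subset hf j i hmem
  have hsubcl := M.subset_closure _ (triple_sub_E hf (A i) (B (i + j)) (C j))
  refine not_indep3_subset_closure (G := {f (A l), f (A i), f (C j)}) (collin_short hf i j)
    (lp_indep3 hf (by simp [hli]) (by simp) (by simp) (noline_AAw hli (by simp) (by simp)))
    (encard3 (hf.1.ne (by simp [hli])) (hf.1.ne (by simp)) (hf.1.ne (by simp))) ?_
  intro u hu
  rcases hu with rfl | rfl | rfl
  · exact hcl
  · exact hsubcl (by simp)
  · exact hsubcl (by simp)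

lemma fV_not_mem_lineJI (hf : IsLpEmbedding p M f) (j i : ZMod p) :
    f V ∉ lineJI M f j i := by
  intro hmem
  have hcl := lineJI_subset hf j i hmem
  have hsubcl := M.subset_closure _ (triple_sub_E hf (A i) (B (i + j)) (C j))
  refine not_indep3_subset_closure (G := {f V, f (A i), f (C j)}) (collin_short hf i j)
    (lp_indep3 hf (by simp) (by simp) (by simp) noline_VAC)
    (encard3 (hf.1.ne (by simp)) (hf.1.ne (by simp)) (hf.1.ne (by simp))) ?_
  intro u hu
  rcases hu with rfl | rfl | rfl
  · exact hcl
  · exact hsubcl (by simp)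
  · exact hsubcl (by simp)


end Emb
end HarmonicPaper

namespace HarmonicPaper
open LpPoint
theorem statement_8 {α : Type*} (p : ℕ) [Fact p.Prime] (hodd : p ≠ 2)
    (M : Matroid α) (hM : IsHarmonic M) (f : LpPoint p → α) (hf : IsLpEmbedding p M f)
    (g : ZMod p → ZMod p → α) (hg : IsKeyFamily M f g) :
    ∀ (pt : α) (px py pz : ZMod p),
      -- `pt` is a point of `P` with homogeneous coordinates `[px, py, pz]`
      ((∃ s k : ZMod p, pt = g s k ∧ px = 1 ∧ py = s ∧ pz = -k) ∨
       (∃ l : ZMod p, pt = f (A l) ∧ px = 0 ∧ py = l ∧ pz = 1) ∨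
       (pt = f V ∧ px = 0 ∧ py = 1 ∧ pz = 0)) →
      ∀ (L : Set α) (a b c : ZMod p),
        -- `L` is the set `⟨a,b,c⟩`
        ((L = {x | ∃ t, x = f (C t)} ∪ {f V} ∧ a = 0 ∧ b = 0 ∧ c = 1) ∨
         (L = {x | ∃ t, x = f (A t)} ∪ {f V} ∧ a = 1 ∧ b = 0 ∧ c = 0) ∨
         (∃ k : ZMod p, k ≠ 0 ∧ L = {x | ∃ t, x = g t k⁻¹} ∪ {f V} ∧
            a = 1 ∧ b = 0 ∧ c = k) ∨
         (∃ i j : ZMod p, L = lineJI M f j i ∧ a = j ∧ b = -1 ∧ c = i)) →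
        (pt ∈ L ↔ a * px + b * py + c * pz = 0) := by
  intro pt px py pz hpt L a b c hL
  rcases hL with ⟨rfl, rfl, rfl, rfl⟩ | ⟨rfl, rfl, rfl, rfl⟩ |
    ⟨k₀, hk₀, rfl, rfl, rfl, rfl⟩ | ⟨i, j, rfl, rfl, rfl, rfl⟩
  · -- L = ⟨0,0,1⟩ (the C-line)
    rcases hpt with ⟨s, k, rfl, rfl, rfl, rfl⟩ | ⟨l, rfl, rfl, rfl, rfl⟩ | ⟨rfl, rfl, rfl, rfl⟩
    · constructor
      · rintro (⟨t, ht⟩ | hV)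
        · have hk0 : k = 0 := by
            by_contra hk0; exact g_ne_C hf hg hk0 py t ht
          subst hk0; simp
        · rw [Set.mem_singleton_iff] at hV
          exact absurd hV (g_ne_V hf hg py k)
      · intro he
        have hk0 : k = 0 := by
          have : -k = 0 := by linear_combination he
          simpa using this
        subst hk0
        exact Or.inl ⟨py, hg.1 py⟩
    · refine iff_of_false ?_ (by simp)
      rintro (⟨t, ht⟩ | hV)
      · exact absurd (hf.1 ht) (by simp)
      · rw [Set.mem_singleton_iff] at hV
        exact absurd (hf.1 hV) (by simp)
    · exact iff_of_true (Or.inr rfl) (by ring)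
  · -- L = ⟨1,0,0⟩ (the A-line)
    rcases hpt with ⟨s, k, rfl, rfl, rfl, rfl⟩ | ⟨l, rfl, rfl, rfl, rfl⟩ | ⟨rfl, rfl, rfl, rfl⟩
    · refine iff_of_false ?_ (by simp)
      rintro (⟨t, ht⟩ | hV)
      · exact absurd ht (g_ne_A hf hg py k t)
      · rw [Set.mem_singleton_iff] at hV
        exact absurd hV (g_ne_V hf hg py k)
    · exact iff_of_true (Or.inl ⟨py, rfl⟩) (by ring)
    · exact iff_of_true (Or.inr rfl) (by ring)
  · -- L = ⟨1,0,k₀⟩, with k₀ renamed to c by the substitutions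
    rcases hpt with ⟨s, k, rfl, rfl, rfl, rfl⟩ | ⟨l, rfl, rfl, rfl, rfl⟩ | ⟨rfl, rfl, rfl, rfl⟩
    · constructor
      · rintro (⟨t, ht⟩ | hV)
        · have hk : k = c⁻¹ := by
            by_contra hne; exact g_ne_g hodd hM hf hg hne ht
          rw [hk, mul_neg, mul_inv_cancel₀ hk₀]; ring
        · rw [Set.mem_singleton_iff] at hV
          exact absurd hV (g_ne_V hf hg py k)
      · intro he
        have hm : c * k = 1 := by linear_combination -he
        have hk : k = c⁻¹ := eq_inv_of_mul_eq_one_right hm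
        exact Or.inl ⟨py, by rw [hk]⟩
    · refine iff_of_false ?_ ?_
      · rintro (⟨t, ht⟩ | hV)
        · exact absurd ht.symm (g_ne_A hf hg t c⁻¹ py)
        · rw [Set.mem_singleton_iff] at hV
          exact absurd (hf.1 hV) (by simp)
      · intro he
        exact hk₀ (by linear_combination he)
    · exact iff_of_true (Or.inr rfl) (by ring)
  · -- L = ⟨j,-1,i⟩, with j renamed to a and i renamed to c
    rcases hpt with ⟨s, k, rfl, rfl, rfl, rfl⟩ | ⟨l, rfl, rfl, rfl, rfl⟩ | ⟨rfl, rfl, rfl, rfl⟩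
    · constructor
      · intro hmem
        have hs : py = a - k * c := by
          by_contra hcon; exact g_not_mem_lineJI hodd hM hf hg hcon hmem
        linear_combination -hs
      · intro he
        have hs : py = a - k * c := by linear_combination -he
        have hm := key_mem_lineJI hg (a - k * c) k c
        have heq : (a - k * c) + k * c = a := by ring
        rw [heq] at hm
        rw [hs]
        exact hm
    · constructor
      · intro hmem
        have hl : py = c := by
          by_contra hcon; exact fA_not_mem_lineJI hf hcon hmem
        linear_combination -hl
      · intro he
        have hl : py = c := by linear_combination -he
        rw [hl]
        exact mem_lineJI_A a c
    · refine iff_of_false (fV_not_mem_lineJI hf a c) ?_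
      intro he
      exact one_ne_zero (α := ZMod p) (by linear_combination -he)


end HarmonicPaper
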